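/- Let F : ℝⁿ → ℝⁿ be the Shapley operator associated with matrices A ∈ T^{m×n}, B ∈ T^{m×q} whose finite entries are integers (every column of A and every row of B having at least one finite entry) and a row-stochastic matrix P with rational entries P_{kl} = Q_{kl}/M for a common denominator M ∈ ℕ, M ≥ 1 and nonnegative integers Q_{kl}. Let k be the number of nondeterministic states, i.e., indices i ∈ {1,…,q} such that P_{il} > 0 for at least two distinct l. Suppose F has a bias vector, i.e., F(v) = ρ + v for some v ∈ ℝⁿ and ρ ∈ ℝ, and that ρ ≠ 0. Then |ρ| ≥ 1 / ( n · M^{min(k, n−1)} ); equivalently, cond(F) := |ρ|⁻¹ ≤ n · M^{min(k, n−1)}. -/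

import Mathlib

set_option linter.unusedSectionVars false
set_option linter.unusedVariables false
set_option maxHeartbeats 1000000


noncomputable section

variable {m n q : ℕ}

/-- The real value of a finite element of `T = ℝ ∪ {-∞}` (junk value `0` at `-∞`). -/
def sval (a : WithBot ℝ) : ℝ := a.unbotD 0

/-- The Shapley operator `F : ℝⁿ → ℝⁿ` associated with `A, B, P`. -/
def shapley (A : Fin m → Fin n → WithBot ℝ) (B : Fin m → Fin q → WithBot ℝ)
    (P : Fin q → Fin n → ℝ) (x : Fin n → ℝ) : Fin n → ℝ := fun j =>
  sInf {r : ℝ | ∃ i, A i j ≠ ⊥ ∧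
    r = - sval (A i j) +
      sSup {s : ℝ | ∃ k, B i k ≠ ⊥ ∧ s = sval (B i k) + ∑ l, P k l * x l}}

open Classical in
/-- The number of nondeterministic states: indices `k` such that `P_{kl} > 0` for at least
two distinct `l`. -/
def nondetCount (P : Fin q → Fin n → ℝ) : ℕ :=
  (Finset.univ.filter fun k => 1 < (Finset.univ.filter fun l => 0 < P k l).card).card

section AuxKeyMC
open Finset Function

namespace KeyMC

variable {S : Type*} [Fintype S] [DecidableEq S]


lemma reach_of_agree {f g : S → S} {i : S} (h : ∀ x, x ≠ i → g x = f x) :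
    ∀ t x, f^[t] x = i → ∃ s, g^[s] x = i := by
  intro t
  induction t with
  | zero => intro x hx; exact ⟨0, hx⟩
  | succ t ih =>
    intro x hx
    by_cases hxi : x = i
    · exact ⟨0, hxi⟩
    · rw [Function.iterate_succ_apply] at hx
      obtain ⟨s, hs⟩ := ih (f x) hx
      exact ⟨s + 1, by rwa [Function.iterate_succ_apply, h x hxi]⟩

lemma iterate_mem {g : S → S} {C : Finset S} (hg : ∀ x ∈ C, g x ∈ C) :
    ∀ t x, x ∈ C → g^[t] x ∈ C := by
  intro t
  induction t with
  | zero => simp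
  | succ t ih =>
    intro x hx
    rw [Function.iterate_succ_apply]
    exact ih _ (hg x hx)

lemma cycle_pred_unique {g : S → S} {j i i' : S} {a b : ℕ}
    (ha : g^[a] j = i) (ha' : g^[a + 1] j = j)
    (hb : g^[b] j = i') (hb' : g^[b + 1] j = j) : i = i' := by
  have key : ∀ (c d : ℕ) (y : S), g^[c] j = y → g^[c + 1] j = j →
      g^[d + 1] j = j → g^[c + d + c * d] j = y := by
    intro c d y hc hc' hd'
    have h2 : g^[(c + 1) * d] j = j := by
      rw [Function.iterate_mul]
      exact Function.iterate_fixed hc' d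
    have : c + d + c * d = c + (c + 1) * d := by ring
    rw [this, Function.iterate_add_apply, h2, hc]
  have e1 : g^[a + b + a * b] j = i := key a b i ha ha' hb'
  have e2 : g^[b + a + b * a] j = i' := key b a i' hb hb' ha'
  have : a + b + a * b = b + a + b * a := by ring
  rw [this, e2] at e1
  exact e1.symm

/-- `f` is a spanning arborescence of `C` with root `r` (identity outside `C \ {r}`). -/
def IsTree (C : Finset S) (r : S) (f : S → S) : Prop :=
  (∀ x, x ∉ C.erase r → f x = x) ∧ (∀ x ∈ C, f x ∈ C) ∧ ∀ x ∈ C, ∃ t, f^[t] x = r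

open Classical in
def treeSet (C : Finset S) (r : S) : Finset (S → S) :=
  univ.filter (IsTree C r)

/-- The weight of root `r`: sum over arborescences of the product of the weights. -/
def wgt (T : S → S → ℝ) (C : Finset S) (r : S) : ℝ :=
  ∑ f ∈ treeSet C r, ∏ x ∈ C.erase r, T x (f x)

open Classical in
def cycSet (C : Finset S) (j : S) : Finset (S → S) :=
  univ.filter fun g => (∀ x, x ∉ C → g x = x) ∧ (∀ x ∈ C, g x ∈ C) ∧
    ∀ x ∈ C, ∃ t, g^[t] x = j

lemma update_isTree {C : Finset S} {g : S → S} {i j : S} (hj : j ∈ C) (hiC : i ∈ C)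
    (hg1 : ∀ x, x ∉ C → g x = x) (hg2 : ∀ x ∈ C, g x ∈ C)
    (hg3 : ∀ x ∈ C, ∃ t, g^[t] x = j) (hreach : ∀ x ∈ C, ∃ t, g^[t] x = i) :
    IsTree C i (Function.update g i i) := by
  have hfagree : ∀ y, y ≠ i → Function.update g i i y = g y :=
    fun y hy => Function.update_of_ne hy _ _
  refine ⟨?_, ?_, ?_⟩
  · intro x hx
    by_cases hxi : x = i
    · subst hxi; exact Function.update_self _ _ _
    · rw [Function.update_of_ne hxi]
      exact hg1 x fun hxC => hx (Finset.mem_erase.2 ⟨hxi, hxC⟩)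
  · intro x hx
    by_cases hxi : x = i
    · subst hxi; rw [Function.update_self]; exact hiC
    · rw [Function.update_of_ne hxi]; exact hg2 x hx
  · intro x hx
    obtain ⟨s, hs⟩ := hreach x hx
    exact reach_of_agree hfagree s x hs

lemma wgt_stationary (T : S → S → ℝ) (C : Finset S)
    (hrowC : ∀ x ∈ C, ∑ y ∈ C, T x y = 1) {j : S} (hj : j ∈ C) :
    ∑ i ∈ C, wgt T C i * T i j = wgt T C j := by
  have key1 : ∑ i ∈ C, wgt T C i * T i j
      = ∑ g ∈ cycSet C j, ∏ x ∈ C, T x (g x) := by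
    have expand : ∑ i ∈ C, wgt T C i * T i j
        = ∑ p ∈ C.sigma (fun i => treeSet C i),
            (∏ x ∈ C.erase p.1, T x (p.2 x)) * T p.1 j := by
      rw [Finset.sum_sigma]
      refine Finset.sum_congr rfl fun i _ => ?_
      rw [wgt, Finset.sum_mul]
    rw [expand]
    refine Finset.sum_bij (fun p _ => Function.update p.2 p.1 j) ?_ ?_ ?_ ?_
    · -- membership
      rintro ⟨i, f⟩ hp
      rw [Finset.mem_sigma] at hp
      obtain ⟨hi, hf⟩ := hp
      simp only [treeSet, Finset.mem_filter] at hf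
      obtain ⟨-, hf1, hf2, hf3⟩ := hf
      dsimp only at hi hf1 hf2 hf3 ⊢
      simp only [cycSet, Finset.mem_filter]
      refine ⟨Finset.mem_univ _, ?_, ?_, ?_⟩
      · intro x hx
        have hxi : x ≠ i := fun h => hx (h ▸ hi)
        rw [Function.update_of_ne hxi]
        exact hf1 x (fun h => hx (Finset.mem_of_mem_erase h))
      · intro x hx
        by_cases hxi : x = i
        · subst hxi; rw [Function.update_self]; exact hj
        · rw [Function.update_of_ne hxi]; exact hf2 x hx
      · intro x hx
        obtain ⟨t, ht⟩ := hf3 x hx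
        have hagree : ∀ y, y ≠ i → Function.update f i j y = f y :=
          fun y hy => Function.update_of_ne hy _ _
        obtain ⟨s, hs⟩ := reach_of_agree hagree t x ht
        exact ⟨s + 1, by rw [Function.iterate_succ_apply', hs, Function.update_self]⟩
    · -- injectivity
      rintro ⟨i, f⟩ hp ⟨i', f'⟩ hp' heqg
      rw [Finset.mem_sigma] at hp hp'
      obtain ⟨hi, hf⟩ := hp
      obtain ⟨hi', hf'⟩ := hp'
      simp only [treeSet, Finset.mem_filter] at hf hf'
      obtain ⟨-, hf1, hf2, hf3⟩ := hf
      obtain ⟨-, hf1', hf2', hf3'⟩ := hf'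
      dsimp only at hi hi' hf1 hf2 hf3 hf1' hf2' hf3' heqg ⊢
      have hreach : ∀ (i₀ : S) (f₀ : S → S), i₀ ∈ C →
          (∀ x ∈ C, ∃ t, f₀^[t] x = i₀) →
          ∃ a, (Function.update f₀ i₀ j)^[a] j = i₀ ∧
            (Function.update f₀ i₀ j)^[a + 1] j = j := by
        intro i₀ f₀ hi₀ h3
        obtain ⟨t, ht⟩ := h3 j hj
        have hagree : ∀ y, y ≠ i₀ → Function.update f₀ i₀ j y = f₀ y :=
          fun y hy => Function.update_of_ne hy _ _
        obtain ⟨a, ha⟩ := reach_of_agree hagree t j ht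
        exact ⟨a, ha, by rw [Function.iterate_succ_apply', ha, Function.update_self]⟩
      obtain ⟨a, ha, ha'⟩ := hreach i f hi hf3
      obtain ⟨b, hb, hb'⟩ := hreach i' f' hi' hf3'
      rw [← heqg] at hb hb'
      have hii : i = i' := cycle_pred_unique ha ha' hb hb'
      subst hii
      have hff : f = f' := by
        funext x
        by_cases hxi : x = i
        · subst hxi
          rw [hf1 x (Finset.notMem_erase _ _), hf1' x (Finset.notMem_erase _ _)]
        · have := congrFun heqg x
          rwa [Function.update_of_ne hxi, Function.update_of_ne hxi] at this
      simp [hff]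
    · -- surjectivity
      intro g hg
      simp only [cycSet, Finset.mem_filter] at hg
      obtain ⟨-, hg1, hg2, hg3⟩ := hg
      obtain ⟨t, ht⟩ := hg3 (g j) (hg2 j hj)
      have hret : g^[t + 1] j = j := by rw [Function.iterate_succ_apply]; exact ht
      have hgij : g (g^[t] j) = j :=
        (Function.iterate_succ_apply' g t j).symm.trans hret
      have hiC : g^[t] j ∈ C := iterate_mem hg2 t j hj
      have hreach2 : ∀ x ∈ C, ∃ s, g^[s] x = g^[t] j := by
        intro x hx
        obtain ⟨s, hs⟩ := hg3 x hx
        exact ⟨t + s, by rw [Function.iterate_add_apply, hs]⟩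
      have hftree : IsTree C (g^[t] j) (Function.update g (g^[t] j) (g^[t] j)) :=
        update_isTree hj hiC hg1 hg2 hg3 hreach2
      refine ⟨⟨g^[t] j, Function.update g (g^[t] j) (g^[t] j)⟩, ?_, ?_⟩
      · rw [Finset.mem_sigma]
        exact ⟨hiC, by simp only [treeSet, Finset.mem_filter]; exact ⟨Finset.mem_univ _, hftree⟩⟩
      · dsimp only
        funext x
        by_cases hxi : x = g^[t] j
        · subst hxi; rw [Function.update_self]; exact hgij.symm
        · rw [Function.update_of_ne hxi, Function.update_of_ne hxi]
    · -- values
      rintro ⟨i, f⟩ hp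
      rw [Finset.mem_sigma] at hp
      obtain ⟨hi, hf⟩ := hp
      dsimp only at hi hf ⊢
      have hprod : ∏ x ∈ C.erase i, T x (Function.update f i j x)
          = ∏ x ∈ C.erase i, T x (f x) := by
        refine Finset.prod_congr rfl fun x hx => ?_
        rw [Function.update_of_ne (Finset.ne_of_mem_erase hx)]
      calc (∏ x ∈ C.erase i, T x (f x)) * T i j
          = (∏ x ∈ C.erase i, T x (Function.update f i j x)) *
              T i (Function.update f i j i) := by
            rw [hprod, Function.update_self]
        _ = ∏ x ∈ C, T x (Function.update f i j x) := Finset.prod_erase_mul C _ hi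
  have key2 : wgt T C j = ∑ g ∈ cycSet C j, ∏ x ∈ C, T x (g x) := by
    have expand : wgt T C j
        = ∑ p ∈ (treeSet C j) ×ˢ C, (∏ x ∈ C.erase j, T x (p.1 x)) * T j p.2 := by
      rw [Finset.sum_product, wgt]
      refine Finset.sum_congr rfl fun f _ => ?_
      dsimp only
      rw [← Finset.mul_sum, hrowC j hj, mul_one]
    rw [expand]
    refine Finset.sum_bij (fun p _ => Function.update p.1 j p.2) ?_ ?_ ?_ ?_
    · rintro ⟨f, l⟩ hp
      rw [Finset.mem_product] at hp
      obtain ⟨hf, hl⟩ := hp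
      simp only [treeSet, Finset.mem_filter] at hf
      obtain ⟨-, hf1, hf2, hf3⟩ := hf
      dsimp only at hf1 hf2 hf3 hl ⊢
      simp only [cycSet, Finset.mem_filter]
      refine ⟨Finset.mem_univ _, ?_, ?_, ?_⟩
      · intro x hx
        have hxj : x ≠ j := fun h => hx (h ▸ hj)
        rw [Function.update_of_ne hxj]
        exact hf1 x (fun h => hx (Finset.mem_of_mem_erase h))
      · intro x hx
        by_cases hxj : x = j
        · subst hxj; rw [Function.update_self]; exact hl
        · rw [Function.update_of_ne hxj]; exact hf2 x hx
      · intro x hx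
        obtain ⟨t, ht⟩ := hf3 x hx
        have hagree : ∀ y, y ≠ j → Function.update f j l y = f y :=
          fun y hy => Function.update_of_ne hy _ _
        exact reach_of_agree hagree t x ht
    · rintro ⟨f, l⟩ hp ⟨f', l'⟩ hp' heqg
      rw [Finset.mem_product] at hp hp'
      obtain ⟨hf, hl⟩ := hp
      obtain ⟨hf', hl'⟩ := hp'
      simp only [treeSet, Finset.mem_filter] at hf hf'
      obtain ⟨-, hf1, hf2, hf3⟩ := hf
      obtain ⟨-, hf1', hf2', hf3'⟩ := hf'
      dsimp only at hf1 hf2 hf3 hf1' hf2' hf3' hl hl' heqg ⊢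
      have hll : l = l' := by
        have := congrFun heqg j
        rwa [Function.update_self, Function.update_self] at this
      have hff : f = f' := by
        funext x
        by_cases hxj : x = j
        · subst hxj
          rw [hf1 x (Finset.notMem_erase _ _), hf1' x (Finset.notMem_erase _ _)]
        · have := congrFun heqg x
          rwa [Function.update_of_ne hxj, Function.update_of_ne hxj] at this
      rw [hll, hff]
    · intro g hg
      simp only [cycSet, Finset.mem_filter] at hg
      obtain ⟨-, hg1, hg2, hg3⟩ := hg
      have hftree : IsTree C j (Function.update g j j) :=
        update_isTree hj hj hg1 hg2 hg3 hg3
      refine ⟨⟨Function.update g j j, g j⟩, ?_, ?_⟩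
      · rw [Finset.mem_product]
        exact ⟨by simp only [treeSet, Finset.mem_filter]; exact ⟨Finset.mem_univ _, hftree⟩,
          hg2 j hj⟩
      · dsimp only
        funext x
        by_cases hxj : x = j
        · subst hxj; rw [Function.update_self]
        · rw [Function.update_of_ne hxj, Function.update_of_ne hxj]
    · rintro ⟨f, l⟩ hp
      rw [Finset.mem_product] at hp
      obtain ⟨hf, hl⟩ := hp
      dsimp only at hf hl ⊢
      have hprod : ∏ x ∈ C.erase j, T x (Function.update f j l x)
          = ∏ x ∈ C.erase j, T x (f x) := by
        refine Finset.prod_congr rfl fun x hx => ?_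
        rw [Function.update_of_ne (Finset.ne_of_mem_erase hx)]
      calc (∏ x ∈ C.erase j, T x (f x)) * T j l
          = (∏ x ∈ C.erase j, T x (Function.update f j l x)) *
              T j (Function.update f j l j) := by
            rw [hprod, Function.update_self]
        _ = ∏ x ∈ C, T x (Function.update f j l x) := Finset.prod_erase_mul C _ hj
  rw [key1, key2]




def reachN (T : S → S → ℝ) (r : S) : ℕ → S → Prop
  | 0, x => x = r
  | (t + 1), x => ∃ y, 0 < T x y ∧ reachN T r t y

lemma reach_toN {T : S → S → ℝ} {r y : S}
    (h : Relation.ReflTransGen (fun a b => 0 < T a b) y r) : ∃ t, reachN T r t y := by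
  induction h using Relation.ReflTransGen.head_induction_on with
  | refl => exact ⟨0, rfl⟩
  | head hab _ ih =>
    obtain ⟨t, ht⟩ := ih
    exact ⟨t + 1, _, hab, ht⟩

/-- Existence of a closed strongly connected class with a positive spanning
arborescence. -/
lemma exists_recurrent [Nonempty S] (T : S → S → ℝ) (hpos : ∀ x y, 0 ≤ T x y) :
    ∃ C : Finset S, C.Nonempty ∧ (∀ x ∈ C, ∀ y, 0 < T x y → y ∈ C) ∧
      ∃ r ∈ C, ∃ f, IsTree C r f ∧ ∀ x ∈ C.erase r, 0 < T x (f x) := by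
  classical
  set Reach := Relation.ReflTransGen (fun x y => 0 < T x y) with hR
  set Rset : S → Finset S := fun x => univ.filter (Reach x) with hRset
  obtain ⟨x₀, -, hmin⟩ := Finset.exists_min_image univ (fun x => (Rset x).card)
    ⟨Classical.arbitrary S, Finset.mem_univ _⟩
  set C := Rset x₀ with hC
  have hmemC : ∀ y, y ∈ C ↔ Reach x₀ y := by
    intro y; rw [hC, hRset]; simp [Finset.mem_filter]
  have hx₀ : x₀ ∈ C := (hmemC x₀).2 Relation.ReflTransGen.refl
  have hclosed : ∀ x ∈ C, ∀ y, 0 < T x y → y ∈ C := by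
    intro x hx y hT
    exact (hmemC y).2 (Relation.ReflTransGen.tail ((hmemC x).1 hx) hT)
  have hback : ∀ y ∈ C, ∃ t, reachN T x₀ t y := by
    intro y hy
    have hsub : Rset y ⊆ C := by
      intro z hz
      rw [hRset] at hz
      simp only [Finset.mem_filter] at hz
      exact (hmemC z).2 (Relation.ReflTransGen.trans ((hmemC y).1 hy) hz.2)
    have heq : Rset y = C :=
      Finset.eq_of_subset_of_card_le hsub (hmin y (Finset.mem_univ _))
    have hx : x₀ ∈ Rset y := heq ▸ hx₀
    rw [hRset] at hx
    simp only [Finset.mem_filter] at hx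
    exact reach_toN hx.2
  -- distance
  set d : S → ℕ := fun y => if h : ∃ t, reachN T x₀ t y then Nat.find h else 0 with hd
  have hstep : ∀ x, x ∈ C.erase x₀ → ∃ y, (0 < T x y ∧ y ∈ C) ∧ d y < d x := by
    intro x hx
    obtain ⟨hxne, hxC⟩ := Finset.mem_erase.1 hx
    have hex : ∃ t, reachN T x₀ t x := hback x hxC
    have hdx : reachN T x₀ (d x) x := by
      rw [hd]; simp only [dif_pos hex]; exact Nat.find_spec hex
    have hdxne : d x ≠ 0 := by
      intro h0
      rw [h0] at hdx
      exact hxne hdx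
    obtain ⟨t, ht⟩ := Nat.exists_eq_succ_of_ne_zero hdxne
    rw [ht] at hdx
    obtain ⟨y, hTxy, hy⟩ := hdx
    refine ⟨y, ⟨hTxy, hclosed x hxC y hTxy⟩, ?_⟩
    have hexy : ∃ s, reachN T x₀ s y := ⟨t, hy⟩
    have : d y ≤ t := by
      rw [hd]; simp only [dif_pos hexy]; exact Nat.find_le hy
    omega
  choose F hF using hstep
  set f : S → S := fun x => if h : x ∈ C.erase x₀ then F x h else x with hf
  have hftree : IsTree C x₀ f := by
    refine ⟨?_, ?_, ?_⟩
    · intro x hx; rw [hf]; simp only [dif_neg hx]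
    · intro x hx
      by_cases hxe : x ∈ C.erase x₀
      · rw [hf]; simp only [dif_pos hxe]; exact (hF x hxe).1.2
      · rw [hf]; simp only [dif_neg hxe]; exact hx
    · intro x hx
      have : ∀ N x, x ∈ C → d x ≤ N → ∃ t, f^[t] x = x₀ := by
        intro N
        induction N with
        | zero =>
          intro x hxC hdx
          by_cases hxe : x = x₀
          · exact ⟨0, hxe⟩
          · obtain ⟨-, hlt⟩ := hF x (Finset.mem_erase.2 ⟨hxe, hxC⟩)
            omega
        | succ N ih =>
          intro x hxC hdx
          by_cases hxe : x = x₀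
          · exact ⟨0, hxe⟩
          · have hxer : x ∈ C.erase x₀ := Finset.mem_erase.2 ⟨hxe, hxC⟩
            obtain ⟨⟨hT1, hC1⟩, hlt⟩ := hF x hxer
            have hfx : f x = F x hxer := by rw [hf]; simp only [dif_pos hxer]
            obtain ⟨t, ht⟩ := ih (F x hxer) hC1 (by omega)
            exact ⟨t + 1, by rw [Function.iterate_succ_apply, hfx, ht]⟩
      exact this (d x) x hx le_rfl
  refine ⟨C, ⟨x₀, hx₀⟩, hclosed, x₀, hx₀, f, hftree, ?_⟩
  intro x hx
  have hfx : f x = F x hx := by rw [hf]; simp only [dif_pos hx]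
  rw [hfx]
  exact (hF x hx).1.1




lemma wgt_le_one (T : S → S → ℝ) (C : Finset S) (hpos : ∀ x y, 0 ≤ T x y)
    (hrowC : ∀ x ∈ C, ∑ y ∈ C, T x y = 1) (r : S) : wgt T C r ≤ 1 := by
  classical
  set φ : (S → S) → (∀ a ∈ C.erase r, S) := fun f => fun a _ => f a with hφ
  have hinj : ∀ f ∈ treeSet C r, ∀ f' ∈ treeSet C r, φ f = φ f' → f = f' := by
    intro f hf f' hf' h
    simp only [treeSet, Finset.mem_filter] at hf hf'
    funext x
    by_cases hx : x ∈ C.erase r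
    · exact congrFun (congrFun h x) hx
    · rw [hf.2.1 x hx, hf'.2.1 x hx]
  have hsub : (treeSet C r).image φ ⊆ (C.erase r).pi (fun _ => C) := by
    intro p hp
    rw [Finset.mem_image] at hp
    obtain ⟨f, hf, rfl⟩ := hp
    simp only [treeSet, Finset.mem_filter] at hf
    rw [Finset.mem_pi]
    intro a ha
    exact hf.2.2.1 a (Finset.mem_of_mem_erase ha)
  calc wgt T C r
      = ∑ f ∈ treeSet C r, ∏ x ∈ (C.erase r).attach, T x.1 (f x.1) := by
        refine Finset.sum_congr rfl fun f _ => ?_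
        exact (Finset.prod_attach _ _).symm
    _ = ∑ p ∈ (treeSet C r).image φ, ∏ x ∈ (C.erase r).attach, T x.1 (p x.1 x.2) :=
        by exact (Finset.sum_image (f := fun (p : ∀ a ∈ C.erase r, S) => ∏ x ∈ (C.erase r).attach, T x.1 (p x.1 x.2)) hinj).symm
    _ ≤ ∑ p ∈ (C.erase r).pi (fun _ => C), ∏ x ∈ (C.erase r).attach, T x.1 (p x.1 x.2) :=
        Finset.sum_le_sum_of_subset_of_nonneg hsub
          (fun p _ _ => Finset.prod_nonneg fun x _ => hpos _ _)
    _ = ∏ x ∈ C.erase r, ∑ y ∈ C, T x y := (Finset.prod_sum _ _ _).symm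
    _ = 1 := Finset.prod_eq_one fun x hx => hrowC x (Finset.mem_of_mem_erase hx)


theorem key {S : Type*} [Fintype S] [DecidableEq S] [Nonempty S] (T : S → S → ℝ) (u γ : S → ℝ)
    (M : ℕ) (hM : 1 ≤ M) (δ ε : S → ℕ) (E : ℕ) (ρ : ℝ) (hρ : ρ ≠ 0)
    (hpos : ∀ x y, 0 ≤ T x y) (hrow : ∀ x, ∑ y, T x y = 1)
    (hT : ∀ x y, ∃ a : ℕ, T x y = (a : ℝ) / (M : ℝ) ^ δ x)
    (hγ : ∀ x, ∃ z : ℤ, γ x = (z : ℝ) / (M : ℝ) ^ ε x)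
    (hE : ∀ r : S, ε r + ∑ x ∈ univ.erase r, δ x ≤ E)
    (heq : ∀ r, ρ + u r = γ r + ∑ r', T r r' * u r') :
    1 / ((Fintype.card S : ℝ) * (M : ℝ) ^ E) ≤ |ρ| := by
  classical
  obtain ⟨C, hCne, hclosed, r₀, hr₀, f₀, hf₀tree, hf₀pos⟩ := exists_recurrent T hpos
  have hMpos : (0:ℝ) < M := by exact_mod_cast Nat.lt_of_lt_of_le Nat.zero_lt_one hM
  have hMne : (M:ℝ) ≠ 0 := ne_of_gt hMpos
  have hzero : ∀ x ∈ C, ∀ y, y ∉ C → T x y = 0 := fun x hx y hy =>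
    le_antisymm (not_lt.1 fun h => hy (hclosed x hx y h)) (hpos x y)
  have hrowC : ∀ x ∈ C, ∑ y ∈ C, T x y = 1 := by
    intro x hx
    have := Finset.sum_subset (Finset.subset_univ C) (fun y _ hy => hzero x hx y hy)
    rw [hrow x] at this
    exact this
  have hwnonneg : ∀ i, 0 ≤ wgt T C i := fun i =>
    Finset.sum_nonneg fun f _ => Finset.prod_nonneg fun x _ => hpos _ _
  have hf₀mem : f₀ ∈ treeSet C r₀ := by
    simp only [treeSet, Finset.mem_filter]; exact ⟨Finset.mem_univ _, hf₀tree⟩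
  have hw₀ : 0 < wgt T C r₀ := by
    have hterm : 0 < ∏ x ∈ C.erase r₀, T x (f₀ x) :=
      Finset.prod_pos fun x hx => hf₀pos x hx
    have hle : ∏ x ∈ C.erase r₀, T x (f₀ x) ≤ wgt T C r₀ :=
      Finset.single_le_sum (f := fun f => ∏ x ∈ C.erase r₀, T x (f x))
        (fun f _ => Finset.prod_nonneg fun x _ => hpos _ _) hf₀mem
    linarith
  set W := ∑ i ∈ C, wgt T C i with hW
  have hWpos : 0 < W :=
    lt_of_lt_of_le hw₀ (Finset.single_le_sum (fun i _ => hwnonneg i) hr₀)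
  -- balance equation
  have hX : ∑ i ∈ C, wgt T C i * ∑ r', T i r' * u r' = ∑ j ∈ C, wgt T C j * u j := by
    have h2 : ∀ i ∈ C, wgt T C i * ∑ r', T i r' * u r'
        = ∑ j ∈ C, wgt T C i * (T i j * u j) := by
      intro i hi
      rw [← Finset.mul_sum]
      congr 1
      exact (Finset.sum_subset (Finset.subset_univ C)
        fun y _ hy => by rw [hzero i hi y hy, zero_mul]).symm
    rw [Finset.sum_congr rfl h2, Finset.sum_comm]
    refine Finset.sum_congr rfl fun j hj => ?_
    calc ∑ i ∈ C, wgt T C i * (T i j * u j)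
        = (∑ i ∈ C, wgt T C i * T i j) * u j := by
          rw [Finset.sum_mul]
          exact Finset.sum_congr rfl fun i _ => by ring
      _ = wgt T C j * u j := by rw [wgt_stationary T C hrowC hj]
  have hbal : ρ * W = ∑ i ∈ C, wgt T C i * γ i := by
    have h1 : ∑ i ∈ C, wgt T C i * (ρ + u i)
        = ∑ i ∈ C, wgt T C i * (γ i + ∑ r', T i r' * u r') :=
      Finset.sum_congr rfl fun i _ => by rw [heq i]
    have hL : ∑ i ∈ C, wgt T C i * (ρ + u i) = ρ * W + ∑ i ∈ C, wgt T C i * u i := by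
      rw [Finset.sum_congr rfl (fun i (_ : i ∈ C) =>
        (by ring : wgt T C i * (ρ + u i) = ρ * wgt T C i + wgt T C i * u i)),
        Finset.sum_add_distrib, ← Finset.mul_sum, hW]
    have hR : ∑ i ∈ C, wgt T C i * (γ i + ∑ r', T i r' * u r')
        = ∑ i ∈ C, wgt T C i * γ i + ∑ i ∈ C, wgt T C i * u i := by
      simp only [mul_add]
      rw [Finset.sum_add_distrib, hX]
    rw [hL, hR] at h1
    linarith
  -- integrality of numerator and denominator
  have hsumδ : ∀ r : S, (∑ x ∈ C.erase r, δ x) + ε r ≤ E := by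
    intro r
    have h1 : ∑ x ∈ C.erase r, δ x ≤ ∑ x ∈ univ.erase r, δ x :=
      Finset.sum_le_sum_of_subset (Finset.erase_subset_erase _ (Finset.subset_univ C))
    have := hE r
    omega
  have hnat : ∀ (r : S) (f : S → S), ∃ aN : ℕ, r ∈ C → f ∈ treeSet C r →
      (aN : ℝ) = (M:ℝ)^E * ∏ x ∈ C.erase r, T x (f x) := by
    intro r f
    choose a ha using fun x => hT x (f x)
    set s := ∑ x ∈ C.erase r, δ x with hs
    refine ⟨M^(E - s) * ∏ x ∈ C.erase r, a x, fun hr hf => ?_⟩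
    have hprod : ∏ x ∈ C.erase r, T x (f x)
        = (∏ x ∈ C.erase r, (a x : ℝ)) / (M:ℝ)^s := by
      rw [hs, ← Finset.prod_pow_eq_pow_sum, ← Finset.prod_div_distrib]
      exact Finset.prod_congr rfl fun x _ => ha x
    have hsE : s ≤ E := le_trans (Nat.le_add_right _ _) (hsumδ r)
    have hpow : (M:ℝ)^E = (M:ℝ)^(E - s) * (M:ℝ)^s := by
      rw [← pow_add, Nat.sub_add_cancel hsE]
    rw [hprod, hpow]
    push_cast
    field_simp
  have hint : ∀ (r : S) (f : S → S), ∃ zN : ℤ, r ∈ C → f ∈ treeSet C r →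
      (zN : ℝ) = (M:ℝ)^E * (∏ x ∈ C.erase r, T x (f x)) * γ r := by
    intro r f
    choose a ha using fun x => hT x (f x)
    obtain ⟨z, hz⟩ := hγ r
    set s := ∑ x ∈ C.erase r, δ x with hs
    refine ⟨(M:ℤ)^(E - (s + ε r)) * (∏ x ∈ C.erase r, (a x : ℤ)) * z, fun hr hf => ?_⟩
    have hprod : ∏ x ∈ C.erase r, T x (f x)
        = (∏ x ∈ C.erase r, (a x : ℝ)) / (M:ℝ)^s := by
      rw [hs, ← Finset.prod_pow_eq_pow_sum, ← Finset.prod_div_distrib]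
      exact Finset.prod_congr rfl fun x _ => ha x
    have hsE : s + ε r ≤ E := hsumδ r
    have hpow : (M:ℝ)^E = (M:ℝ)^(E - (s + ε r)) * (M:ℝ)^s * (M:ℝ)^(ε r) := by
      rw [← pow_add, ← pow_add]
      congr 1
      omega
    rw [hprod, hpow, hz]
    push_cast
    field_simp
  choose aN haN using hnat
  choose zN hzN using hint
  set DN : ℕ := ∑ i ∈ C, ∑ f ∈ treeSet C i, aN i f with hDN
  set NN : ℤ := ∑ i ∈ C, ∑ f ∈ treeSet C i, zN i f with hNN
  have hDNval : (DN:ℝ) = (M:ℝ)^E * W := by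
    rw [hDN, hW]
    push_cast
    rw [Finset.mul_sum]
    refine Finset.sum_congr rfl fun i hi => ?_
    rw [wgt, Finset.mul_sum]
    exact Finset.sum_congr rfl fun f hf => haN i f hi hf
  have hNNval : (NN:ℝ) = (M:ℝ)^E * ∑ i ∈ C, wgt T C i * γ i := by
    rw [hNN]
    push_cast
    rw [Finset.mul_sum]
    refine Finset.sum_congr rfl fun i hi => ?_
    rw [wgt, Finset.sum_mul, Finset.mul_sum]
    exact Finset.sum_congr rfl fun f hf => by rw [hzN i f hi hf]; ring
  have hND : (NN:ℝ) = ρ * DN := by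
    rw [hNNval, ← hbal, hDNval]; ring
  have hDNpos : (0:ℝ) < DN := by
    rw [hDNval]; positivity
  have hNNne : NN ≠ 0 := by
    intro h0
    rw [h0] at hND
    simp only [Int.cast_zero] at hND
    exact hρ (by
      rcases mul_eq_zero.1 hND.symm with h | h
      · exact h
      · exact absurd h (ne_of_gt hDNpos))
  have h1NN : (1:ℝ) ≤ |(NN:ℝ)| := by
    rw [← Int.cast_abs]
    exact_mod_cast Int.one_le_abs hNNne
  have hρDN : |ρ| * DN = |(NN:ℝ)| := by
    rw [hND, abs_mul, abs_of_pos hDNpos]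
  have hDle : (DN:ℝ) ≤ (Fintype.card S : ℝ) * (M:ℝ)^E := by
    rw [hDNval, hW]
    have hWle : ∑ i ∈ C, wgt T C i ≤ (Fintype.card S : ℝ) := by
      calc ∑ i ∈ C, wgt T C i ≤ ∑ i ∈ C, (1:ℝ) :=
            Finset.sum_le_sum fun i _ => wgt_le_one T C hpos hrowC i
        _ = (C.card : ℝ) := by simp
        _ ≤ (Fintype.card S : ℝ) := by
            exact_mod_cast Finset.card_le_card (Finset.subset_univ C)
    calc (M:ℝ)^E * ∑ i ∈ C, wgt T C i ≤ (M:ℝ)^E * (Fintype.card S : ℝ) :=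
          mul_le_mul_of_nonneg_left hWle (by positivity)
      _ = (Fintype.card S : ℝ) * (M:ℝ)^E := by ring
  have hfin : 1 / ((Fintype.card S : ℝ) * (M:ℝ)^E) ≤ 1 / (DN:ℝ) :=
    one_div_le_one_div_of_le hDNpos hDle
  have hlast : 1 / (DN:ℝ) ≤ |ρ| := by
    rw [div_le_iff₀ hDNpos]
    rw [hρDN]
    exact h1NN
  linarith

end KeyMC

end AuxKeyMC

open KeyMC

/-- Bound on the condition number: if `F` has a bias vector with nonzero ergodic constant
`ρ`, then `|ρ| ≥ 1 / (n * M ^ min(k, n-1))`, where `k` is the number of nondeterministic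
states. -/
theorem stmt11 {M : ℕ} (hM : 1 ≤ M)
    (A : Fin m → Fin n → WithBot ℝ) (B : Fin m → Fin q → WithBot ℝ)
    (P : Fin q → Fin n → ℝ) (Q : Fin q → Fin n → ℕ)
    (hAcol : ∀ j, ∃ i, A i j ≠ ⊥)
    (hBrow : ∀ i, ∃ k, B i k ≠ ⊥)
    (hAint : ∀ i j, A i j = ⊥ ∨ ∃ z : ℤ, A i j = ((z : ℝ) : WithBot ℝ))
    (hBint : ∀ i k, B i k = ⊥ ∨ ∃ z : ℤ, B i k = ((z : ℝ) : WithBot ℝ))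
    (hPQ : ∀ k l, P k l = (Q k l : ℝ) / (M : ℝ))
    (hPsum : ∀ k, ∑ l, P k l = 1)
    (v : Fin n → ℝ) (ρ : ℝ) (hρ : ρ ≠ 0)
    (hbias : shapley A B P v = fun j => ρ + v j) :
    1 / ((n : ℝ) * (M : ℝ) ^ (min (nondetCount P) (n - 1))) ≤ |ρ| := by
  classical
  have hMR : (0:ℝ) < M := by exact_mod_cast Nat.lt_of_lt_of_le Nat.zero_lt_one hM
  have hPnn : ∀ k l, 0 ≤ P k l := fun k l => by rw [hPQ]; positivity
  -- n = 0 case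
  rcases Nat.eq_zero_or_pos n with hn0 | hn
  · subst hn0
    simp only [Nat.cast_zero, zero_mul, div_zero]
    exact abs_nonneg ρ
  -- extraction of one-step equations
  have hstep : ∀ j : Fin n, ∃ (kk : Fin q) (z : ℤ),
      ρ + v j = (z : ℝ) + ∑ l, P kk l * v l := by
    intro j
    have hj : shapley A B P v j = ρ + v j := congrFun hbias j
    simp only [shapley] at hj
    set O : Set ℝ := {r | ∃ i, A i j ≠ ⊥ ∧ r = - sval (A i j) +
      sSup {s : ℝ | ∃ k, B i k ≠ ⊥ ∧ s = sval (B i k) + ∑ l, P k l * v l}} with hO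
    have hOfin : O.Finite := by
      have hsub : O ⊆ (fun i : Fin m => - sval (A i j) +
          sSup {s : ℝ | ∃ k, B i k ≠ ⊥ ∧ s = sval (B i k) + ∑ l, P k l * v l}) ''
            Set.univ := by
        rintro r ⟨i, hi, rfl⟩
        exact ⟨i, Set.mem_univ _, rfl⟩
      exact Set.Finite.subset (Set.Finite.image _ Set.finite_univ) hsub
    have hOne : O.Nonempty := by
      obtain ⟨i, hi⟩ := hAcol j
      exact ⟨_, i, hi, rfl⟩
    obtain ⟨i, hAij, hEq⟩ := hOne.csInf_mem hOfin
    set Si : Set ℝ := {s : ℝ | ∃ k, B i k ≠ ⊥ ∧ s = sval (B i k) + ∑ l, P k l * v l}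
      with hSi
    have hSfin : Si.Finite := by
      have hsub : Si ⊆ (fun k : Fin q => sval (B i k) + ∑ l, P k l * v l) ''
          Set.univ := by
        rintro r ⟨k, hk, rfl⟩
        exact ⟨k, Set.mem_univ _, rfl⟩
      exact Set.Finite.subset (Set.Finite.image _ Set.finite_univ) hsub
    have hSne : Si.Nonempty := by
      obtain ⟨k, hk⟩ := hBrow i
      exact ⟨_, k, hk, rfl⟩
    obtain ⟨kk, hBik, hEq2⟩ := hSne.csSup_mem hSfin
    rcases hAint i j with h | ⟨za, hza⟩
    · exact absurd h hAij
    rcases hBint i kk with h | ⟨zb, hzb⟩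
    · exact absurd h hBik
    refine ⟨kk, zb - za, ?_⟩
    have h1 : sval (A i j) = za := by rw [hza, sval, WithBot.unbotD_coe]
    have h2 : sval (B i kk) = zb := by rw [hzb, sval, WithBot.unbotD_coe]
    rw [← hj, hEq, hEq2, h1, h2]
    push_cast
    ring
  choose σ c hc using hstep
  -- case split on the min
  rcases le_total ((n:ℕ) - 1) (nondetCount P) with hcase | hcase
  · -- min = n - 1 : use the chain on Fin n directly
    have hmin : min (nondetCount P) (n - 1) = n - 1 := min_eq_right hcase
    rw [hmin]
    have : Nonempty (Fin n) := ⟨⟨0, hn⟩⟩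
    have hkey := key (S := Fin n) (fun j l => P (σ j) l) v (fun j => (c j : ℝ))
      M hM (fun _ => 1) (fun _ => 0) (n - 1) ρ hρ
      (fun x y => hPnn _ _) (fun x => hPsum (σ x))
      (fun x y => ⟨Q (σ x) y, by
        show P (σ x) y = (Q (σ x) y : ℝ) / (M:ℝ) ^ 1
        rw [hPQ, pow_one]⟩)
      (fun x => ⟨c x, by
        show (c x : ℝ) = (c x : ℝ) / (M:ℝ) ^ 0
        rw [pow_zero, div_one]⟩)
      (fun r => by
        rw [Finset.sum_const, smul_eq_mul, mul_one, Finset.card_erase_of_mem]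
        · rw [Finset.card_univ, Fintype.card_fin]
          omega
        · exact Finset.mem_univ r)
      (fun r => hc r)
    rwa [Fintype.card_fin] at hkey
  · -- min = nondetCount P : use the chain on the range of σ
    have hmin : min (nondetCount P) (n - 1) = nondetCount P := min_eq_left hcase
    rw [hmin]
    set Nd : Fin q → Prop := fun k => 1 < (Finset.univ.filter fun l => 0 < P k l).card
      with hNd
    have hdet : ∀ k : Fin q, ¬ Nd k →
        ∃ l0 : Fin n, ∀ l, P k l = if l = l0 then 1 else 0 := by
      intro k hk
      set pos := Finset.univ.filter (fun l => 0 < P k l) with hposs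
      have hne : pos.Nonempty := by
        rw [Finset.nonempty_iff_ne_empty]
        intro h
        have hz : ∀ l, P k l = 0 := by
          intro l
          rcases eq_or_lt_of_le (hPnn k l) with h' | h'
          · exact h'.symm
          · exfalso
            have : l ∈ pos := by rw [hposs]; simp [h']
            rw [h] at this
            exact absurd this (Finset.notMem_empty l)
        have h1 := hPsum k
        rw [Finset.sum_congr rfl (fun l _ => hz l)] at h1
        simp at h1
      have hcard : pos.card = 1 := by
        have h1 : 1 ≤ pos.card := Finset.card_pos.2 hne
        have h2 : ¬ 1 < pos.card := hk
        omega
      obtain ⟨l0, hl0⟩ := Finset.card_eq_one.1 hcard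
      refine ⟨l0, fun l => ?_⟩
      by_cases hl : l = l0
      · subst hl
        rw [if_pos rfl]
        have hothers : ∀ b : Fin n, b ∈ Finset.univ → b ≠ l → P k b = 0 := by
          intro b _ hb
          have : b ∉ pos := by rw [hl0]; simp [hb]
          rw [hposs] at this
          simp only [Finset.mem_filter, Finset.mem_univ, true_and, not_lt] at this
          exact le_antisymm this (hPnn k b)
        have := Finset.sum_eq_single l (fun b hb hbl => hothers b hb hbl)
          (fun h => absurd (Finset.mem_univ l) h)
        rw [← this]
        exact hPsum k
      · rw [if_neg hl]
        have : l ∉ pos := by rw [hl0]; simp [hl]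
        rw [hposs] at this
        simp only [Finset.mem_filter, Finset.mem_univ, true_and, not_lt] at this
        exact le_antisymm this (hPnn k l)
    have hnean : Nonempty ↥(Set.range σ) := ⟨⟨σ ⟨0, hn⟩, ⟨⟨0, hn⟩, rfl⟩⟩⟩
    set Tt : ↥(Set.range σ) → ↥(Set.range σ) → ℝ :=
      fun r r' => ∑ l, if σ l = r'.1 then P r.1 l else 0 with hTt
    set uu : ↥(Set.range σ) → ℝ := fun r => ∑ l, P r.1 l * v l with huu
    set γγ : ↥(Set.range σ) → ℝ := fun r => ∑ l, P r.1 l * (c l : ℝ) with hγγ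
    set δδ : ↥(Set.range σ) → ℕ := fun r => if Nd r.1 then 1 else 0 with hδδ
    -- the inner single-sum computation
    have hsum1 : ∀ (r : ↥(Set.range σ)) (l : Fin n) (F : ↥(Set.range σ) → ℝ),
        (∑ r' : ↥(Set.range σ), (if σ l = r'.1 then P r.1 l else 0) * F r')
          = P r.1 l * F ⟨σ l, ⟨l, rfl⟩⟩ := by
      intro r l F
      have h := Fintype.sum_eq_single
        (f := fun r' : ↥(Set.range σ) => (if σ l = r'.1 then P r.1 l else 0) * F r')
        (⟨σ l, ⟨l, rfl⟩⟩ : ↥(Set.range σ)) (fun b hb => by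
          have hne : σ l ≠ b.1 := fun h => hb (Subtype.ext h.symm)
          simp only [if_neg hne, zero_mul])
      simpa using h
    have hrowB : ∀ x, ∑ y, Tt x y = 1 := by
      intro x
      simp only [hTt]
      rw [Finset.sum_comm]
      calc ∑ l, ∑ r' : ↥(Set.range σ), (if σ l = r'.1 then P x.1 l else 0)
          = ∑ l, P x.1 l := by
            refine Finset.sum_congr rfl fun l _ => ?_
            have := hsum1 x l (fun _ => 1)
            simpa using this
        _ = 1 := hPsum x.1
    have hkey := key (S := ↥(Set.range σ)) Tt uu γγ M hM δδ δδ (nondetCount P) ρ hρ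
      (fun x y => Finset.sum_nonneg fun l _ => by
        split_ifs
        · exact hPnn _ _
        · exact le_refl 0)
      hrowB
      (fun x y => by
        by_cases hnd : Nd x.1
        · refine ⟨∑ l, if σ l = y.1 then Q x.1 l else 0, ?_⟩
          simp only [hδδ, hTt, if_pos hnd, pow_one]
          push_cast
          rw [Finset.sum_div]
          refine Finset.sum_congr rfl fun l _ => ?_
          split_ifs
          · rw [hPQ]
          · rw [zero_div]
        · obtain ⟨l0, hl0⟩ := hdet x.1 hnd
          refine ⟨if σ l0 = y.1 then 1 else 0, ?_⟩
          simp only [hδδ, hTt, if_neg hnd, pow_zero, div_one]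
          have : ∀ l : Fin n, (if σ l = y.1 then P x.1 l else 0)
              = if l = l0 then (if σ l0 = y.1 then 1 else 0) else 0 := by
            intro l
            by_cases hl : l = l0
            · subst hl
              rw [if_pos rfl, hl0 l, if_pos rfl]
            · rw [if_neg hl, hl0 l, if_neg hl]
              split_ifs <;> rfl
          refine (Finset.sum_congr rfl (fun l _ => this l)).trans ?_
          rw [Finset.sum_ite_eq' Finset.univ l0]
          simp only [Finset.mem_univ, if_pos]
          split_ifs <;> simp)
      (fun x => by
        by_cases hnd : Nd x.1
        · refine ⟨∑ l, (Q x.1 l : ℤ) * c l, ?_⟩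
          simp only [hδδ, hγγ, if_pos hnd, pow_one]
          push_cast
          rw [Finset.sum_div]
          refine Finset.sum_congr rfl fun l _ => ?_
          rw [hPQ]
          ring
        · obtain ⟨l0, hl0⟩ := hdet x.1 hnd
          refine ⟨c l0, ?_⟩
          simp only [hδδ, hγγ, if_neg hnd, pow_zero, div_one]
          have : ∀ l : Fin n, P x.1 l * (c l : ℝ)
              = if l = l0 then (c l0 : ℝ) else 0 := by
            intro l
            by_cases hl : l = l0
            · subst hl
              rw [hl0 l, if_pos rfl, if_pos rfl, one_mul]
            · rw [hl0 l, if_neg hl, if_neg hl, zero_mul]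
          refine (Finset.sum_congr rfl (fun l _ => this l)).trans ?_
          rw [Finset.sum_ite_eq' Finset.univ l0]
          simp)
      (fun r => by
        rw [Finset.add_sum_erase]
        swap
        · exact Finset.mem_univ r
        simp only [hδδ]
        have h2 : ∑ x : ↥(Set.range σ), (if Nd x.1 then 1 else 0)
            = (Finset.univ.filter (fun x : ↥(Set.range σ) => Nd x.1)).card := by
          rw [Finset.card_eq_sum_ones, Finset.sum_filter]
        rw [h2]
        have h3 : (Finset.univ.filter (fun x : ↥(Set.range σ) => Nd x.1)).card
            ≤ (Finset.univ.filter (fun k : Fin q =>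
                1 < (Finset.univ.filter fun l => 0 < P k l).card)).card := by
          refine Finset.card_le_card_of_injOn Subtype.val ?_ ?_
          · intro x hx
            simp only [Finset.coe_filter, Finset.mem_coe, Finset.mem_filter, Finset.mem_univ, true_and, Set.mem_setOf_eq] at hx ⊢
            exact hx
          · intro x _ y _ h
            exact Subtype.ext h
        have h4 : (Finset.univ.filter (fun k : Fin q =>
            1 < (Finset.univ.filter fun l => 0 < P k l).card)).card = nondetCount P := rfl
        omega)
      (fun r => by
        -- the transformed fixed point equation
        have hmain : ρ + uu r = γγ r + ∑ l, P r.1 l * uu ⟨σ l, ⟨l, rfl⟩⟩ := by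
          have h1 : ρ + uu r = ∑ l, P r.1 l * (ρ + v l) := by
            have : ∑ l, P r.1 l * (ρ + v l)
                = (∑ l, P r.1 l) * ρ + ∑ l, P r.1 l * v l := by
              rw [Finset.sum_mul]
              rw [← Finset.sum_add_distrib]
              refine Finset.sum_congr rfl fun l _ => ?_
              ring
            rw [this, hPsum r.1, one_mul]
          rw [h1]
          have h2 : ∀ l : Fin n, P r.1 l * (ρ + v l)
              = P r.1 l * (c l : ℝ) + P r.1 l * uu ⟨σ l, ⟨l, rfl⟩⟩ := by
            intro l
            rw [hc l]
            show P (↑r) l * ((c l : ℝ) + ∑ l', P (σ l) l' * v l')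
              = P (↑r) l * (c l : ℝ) + P (↑r) l * ∑ l', P (σ l) l' * v l'
            ring
          rw [Finset.sum_congr rfl (fun l _ => h2 l), Finset.sum_add_distrib]
        rw [hmain]
        congr 1
        refine Eq.symm ?_
        have h3 : ∀ r' : ↥(Set.range σ), Tt r r' * uu r'
            = ∑ l, (if σ l = r'.1 then P r.1 l else 0) * uu r' := by
          intro r'
          simp only [hTt]
          rw [Finset.sum_mul]
        rw [Finset.sum_congr rfl (fun r' _ => h3 r'), Finset.sum_comm]
        exact Finset.sum_congr rfl (fun l _ => hsum1 r l uu))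
    have hcard : (Fintype.card ↥(Set.range σ) : ℝ) ≤ (n : ℝ) := by
      have := Fintype.card_range_le σ
      rw [Fintype.card_fin] at this
      exact_mod_cast this
    have hpow : (0:ℝ) < (M:ℝ) ^ nondetCount P := by positivity
    have hcardpos : 0 < Fintype.card ↥(Set.range σ) := Fintype.card_pos
    refine le_trans ?_ hkey
    apply one_div_le_one_div_of_le
    · positivity
    · apply mul_le_mul_of_nonneg_right hcard (le_of_lt hpow)
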